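/- Suppose a weight ω on the Grigorchuk group satisfies: there exist constants K ≥ 0 and η with 1 < η < 4 such that ∂_ω(h) ≤ η·max{∂_ω(h₀), ∂_ω(h₁)} + K for all h in the first-level stabilizer H (where ψ(h)=(h₀,h₁)). Then the growth function of G satisfies γ(n) ≿ e^{n^α} with α = log 2 / log η > 1/2; i.e., there exist constants C, c > 0 such that γ(Cn) ≥ e^{c·n^α} for all sufficiently large n. -/

import Mathlib

/-- The generator `a` of the Grigorchuk group, acting on finite binary sequences. -/
def grigA : List Bool → List Bool
  | [] => []
  | x :: σ => (!x) :: σ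

mutual
  /-- The generator `b` of the Grigorchuk group. -/
  def grigB : List Bool → List Bool
    | [] => []
    | false :: σ => false :: grigA σ
    | true :: σ => true :: grigC σ
  /-- The generator `c` of the Grigorchuk group. -/
  def grigC : List Bool → List Bool
    | [] => []
    | false :: σ => false :: grigA σ
    | true :: σ => true :: grigD σ
  /-- The generator `d` of the Grigorchuk group. -/
  def grigD : List Bool → List Bool
    | [] => []
    | false :: σ => false :: σ
    | true :: σ => true :: grigB σ
end

theorem grigA_involutive : Function.Involutive grigA := by
  intro l
  rcases l with _ | ⟨x, σ⟩
  · rfl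
  · cases x <;> rfl

theorem grigBCD_involutive :
    ∀ l : List Bool, grigB (grigB l) = l ∧ grigC (grigC l) = l ∧ grigD (grigD l) = l := by
  intro l
  induction l with
  | nil => exact ⟨rfl, rfl, rfl⟩
  | cons x σ ih =>
      cases x <;>
        simp [grigB, grigC, grigD, grigA_involutive σ, ih.1, ih.2.1, ih.2.2]

theorem grigB_involutive : Function.Involutive grigB := fun l => (grigBCD_involutive l).1
theorem grigC_involutive : Function.Involutive grigC := fun l => (grigBCD_involutive l).2.1
theorem grigD_involutive : Function.Involutive grigD := fun l => (grigBCD_involutive l).2.2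

/-- The generator `a` as a permutation of binary sequences. -/
def aP : Equiv.Perm (List Bool) := grigA_involutive.toPerm
/-- The generator `b` as a permutation of binary sequences. -/
def bP : Equiv.Perm (List Bool) := grigB_involutive.toPerm
/-- The generator `c` as a permutation of binary sequences. -/
def cP : Equiv.Perm (List Bool) := grigC_involutive.toPerm
/-- The generator `d` as a permutation of binary sequences. -/
def dP : Equiv.Perm (List Bool) := grigD_involutive.toPerm

/-- The Grigorchuk group, as the group of permutations of finite binary sequences
generated by `a`, `b`, `c`, `d`. -/
def Grig : Subgroup (Equiv.Perm (List Bool)) := Subgroup.closure {aP, bP, cP, dP}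

/-- `a` as an element of the Grigorchuk group. -/
def ga : Grig := ⟨aP, Subgroup.subset_closure (by simp)⟩
/-- `b` as an element of the Grigorchuk group. -/
def gb : Grig := ⟨bP, Subgroup.subset_closure (by simp)⟩
/-- `c` as an element of the Grigorchuk group. -/
def gc : Grig := ⟨cP, Subgroup.subset_closure (by simp)⟩
/-- `d` as an element of the Grigorchuk group. -/
def gd : Grig := ⟨dP, Subgroup.subset_closure (by simp)⟩

/-- A permutation of binary sequences preserves the first letter. -/
def FixesFirst (g : Equiv.Perm (List Bool)) : Prop :=
  ∀ (x : Bool) (σ : List Bool), ∃ σ' : List Bool, g (x :: σ) = x :: σ'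
/-- The weight (norm) on a group `G` induced by a weight function `ω` on a generating set
`S`: the infimum of the total weights of words over `S` representing `g`. -/
noncomputable def wordWeight {G : Type*} [Group G] (S : Set G) (ω : G → ℝ) (g : G) : ℝ :=
  sInf ((fun l : List G => (l.map ω).sum) '' {l : List G | (∀ s ∈ l, s ∈ S) ∧ l.prod = g})

/-- The growth function of `G` with respect to the generating set `S` and weight `ω`:
the number of elements of weight at most `x`. -/
noncomputable def growth {G : Type*} [Group G] (S : Set G) (ω : G → ℝ) (x : ℝ) : ℕ :=
  Nat.card {g : G | wordWeight S ω g ≤ x}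

/-- The word length of `g` with respect to the generating set `S`. -/
noncomputable def wordLength {G : Type*} [Group G] (S : Set G) (g : G) : ℕ :=
  sInf {n : ℕ | ∃ l : List G, (∀ s ∈ l, s ∈ S) ∧ l.prod = g ∧ l.length = n}

/-- The defining property of the subtree-decomposition map `ψ : H → G × G`:
`h(0σ) = 0·h₀(σ)` and `h(1σ) = 1·h₁(σ)` where `ψ(h) = (h₀, h₁)`. -/
def PsiProp (H : Subgroup Grig) (ψ : H →* Grig × Grig) : Prop :=
  ∀ (h : H) (σ : List Bool),
    ((h : Grig) : Equiv.Perm (List Bool)) (false :: σ) =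
        false :: (((ψ h).1 : Grig) : Equiv.Perm (List Bool)) σ ∧
    ((h : Grig) : Equiv.Perm (List Bool)) (true :: σ) =
        true :: (((ψ h).2 : Grig) : Equiv.Perm (List Bool)) σ

-- ===== auxiliary lemmas =====

@[simp] lemma aP_apply (l : List Bool) : aP l = grigA l := rfl
@[simp] lemma bP_apply (l : List Bool) : bP l = grigB l := rfl
@[simp] lemma cP_apply (l : List Bool) : cP l = grigC l := rfl
@[simp] lemma dP_apply (l : List Bool) : dP l = grigD l := rfl

@[simp] lemma ga_val : ((ga : Grig) : Equiv.Perm (List Bool)) = aP := rfl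
@[simp] lemma gb_val : ((gb : Grig) : Equiv.Perm (List Bool)) = bP := rfl
@[simp] lemma gc_val : ((gc : Grig) : Equiv.Perm (List Bool)) = cP := rfl
@[simp] lemma gd_val : ((gd : Grig) : Equiv.Perm (List Bool)) = dP := rfl

lemma ga_sq : ga * ga = 1 := by
  exact Subtype.ext (Equiv.ext fun l => grigA_involutive l)
lemma gb_sq : gb * gb = 1 := by
  exact Subtype.ext (Equiv.ext fun l => grigB_involutive l)
lemma gc_sq : gc * gc = 1 := by
  exact Subtype.ext (Equiv.ext fun l => grigC_involutive l)
lemma gd_sq : gd * gd = 1 := by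
  exact Subtype.ext (Equiv.ext fun l => grigD_involutive l)

lemma grigBC : ∀ l : List Bool,
    grigB (grigC l) = grigD l ∧ grigC (grigD l) = grigB l ∧ grigD (grigB l) = grigC l := by
  intro l
  induction l with
  | nil => exact ⟨rfl, rfl, rfl⟩
  | cons x σ ih =>
      cases x <;>
        simp [grigB, grigC, grigD, grigA_involutive σ, ih.1, ih.2.1, ih.2.2]

lemma gd_eq : gd = gb * gc := by
  exact Subtype.ext (Equiv.ext fun l => ((grigBC l).1).symm)

lemma grig_closure_top : Subgroup.closure ({ga, gb, gc, gd} : Set Grig) = ⊤ := by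
  apply Subgroup.map_injective (Subgroup.subtype_injective Grig)
  rw [MonoidHom.map_closure, ← MonoidHom.range_eq_map, Subgroup.range_subtype]
  have : (Grig.subtype '' {ga, gb, gc, gd}) = ({aP, bP, cP, dP} : Set (Equiv.Perm (List Bool))) := by
    simp only [Set.image_insert_eq, Set.image_singleton]
    rfl
  rw [this]
  rfl

lemma grig_mem_closure (g : Grig) : g ∈ Subgroup.closure ({ga, gb, gc, gd} : Set Grig) := by
  rw [grig_closure_top]; trivial

lemma gen_inv_mem {s : Grig} (hs : s ∈ ({ga, gb, gc, gd} : Set Grig)) :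
    s⁻¹ ∈ ({ga, gb, gc, gd} : Set Grig) ∧ s⁻¹ = s := by
  have : s * s = 1 := by
    rcases hs with rfl | rfl | rfl | rfl
    exacts [ga_sq, gb_sq, gc_sq, gd_sq]
  have h2 : s⁻¹ = s := by
    rw [inv_eq_iff_mul_eq_one, this]
  rw [h2]; exact ⟨hs, rfl⟩

/-- every element of the Grigorchuk group is represented by a word in the generators -/
lemma exists_word (g : Grig) : ∃ l : List Grig,
    (∀ s ∈ l, s ∈ ({ga, gb, gc, gd} : Set Grig)) ∧ l.prod = g := by
  refine Subgroup.closure_induction ?_ ?_ ?_ ?_ (grig_mem_closure g)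
  · intro x hx; exact ⟨[x], by simpa using hx, by simp⟩
  · exact ⟨[], by simp, by simp⟩
  · rintro x y _ _ ⟨l, hl, rfl⟩ ⟨m, hm, rfl⟩
    refine ⟨l ++ m, ?_, by simp⟩
    intro s hs
    rcases List.mem_append.1 hs with h | h
    exacts [hl s h, hm s h]
  · rintro x _ ⟨l, hl, rfl⟩
    refine ⟨(l.map (·⁻¹)).reverse, ?_, ?_⟩
    · intro s hs
      simp only [List.mem_reverse, List.mem_map] at hs
      obtain ⟨t, ht, rfl⟩ := hs
      exact (gen_inv_mem (hl t ht)).1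
    · rw [List.prod_reverse_noncomm]
      simp

/-- every element of the Grigorchuk group fixes the empty sequence -/
lemma grig_fix_nil (g : Grig) : ((g : Grig) : Equiv.Perm (List Bool)) [] = [] := by
  obtain ⟨x, hx⟩ := g
  refine Subgroup.closure_induction (p := fun x _ => x [] = []) ?_ rfl ?_ ?_ hx
  · rintro x (rfl | rfl | rfl | rfl) <;> rfl
  · intro x y _ _ h1 h2
    simp [Equiv.Perm.mul_apply, h2, h1]
  · intro x _ h1
    have : x⁻¹ (x []) = [] := Equiv.symm_apply_apply x []
    rwa [h1] at this

-- ===== wordWeight lemmas =====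

/-- the generating set -/
def GS : Set Grig := {ga, gb, gc, gd}

section WW

variable (ω : Grig → ℝ) (hω : ∀ s ∈ GS, 0 < ω s)


include hω in
lemma word_sum_nonneg {l : List Grig} (hl : ∀ s ∈ l, s ∈ GS) : 0 ≤ (l.map ω).sum := by
  apply List.sum_nonneg
  intro x hx
  simp only [List.mem_map] at hx
  obtain ⟨s, hs, rfl⟩ := hx
  exact (hω s (hl s hs)).le

include hω in
lemma wordWeight_le {g : Grig} {l : List Grig} (hl : ∀ s ∈ l, s ∈ GS) (hp : l.prod = g) :
    wordWeight GS ω g ≤ (l.map ω).sum := by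
  apply csInf_le
  · refine ⟨0, ?_⟩
    rintro y ⟨m, ⟨hm, -⟩, rfl⟩
    exact word_sum_nonneg ω hω hm
  · exact ⟨l, ⟨hl, hp⟩, rfl⟩

include hω in
lemma wordWeight_nonneg (g : Grig) : 0 ≤ wordWeight GS ω g := by
  apply Real.sInf_nonneg
  rintro y ⟨m, ⟨hm, -⟩, rfl⟩
  exact word_sum_nonneg ω hω hm

include hω in
lemma wordWeight_one : wordWeight GS ω 1 ≤ 0 := by
  simpa using wordWeight_le ω hω (l := []) (by simp) (by simp)

include hω in
lemma exists_word_le {g : Grig} {x ε : ℝ} (hε : 0 < ε) (h : wordWeight GS ω g ≤ x) :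
    ∃ l : List Grig, (∀ s ∈ l, s ∈ GS) ∧ l.prod = g ∧ (l.map ω).sum < x + ε := by
  have hne : ((fun l : List Grig => (l.map ω).sum) ''
      {l : List Grig | (∀ s ∈ l, s ∈ GS) ∧ l.prod = g}).Nonempty := by
    obtain ⟨l, hl, hp⟩ := exists_word g
    exact ⟨_, ⟨l, ⟨hl, hp⟩, rfl⟩⟩
  obtain ⟨y, ⟨l, ⟨hl, hp⟩, rfl⟩, hy⟩ := Real.lt_sInf_add_pos hne hε
  refine ⟨l, hl, hp, ?_⟩
  rw [wordWeight] at h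
  simp only at hy
  exact lt_of_lt_of_le hy (by linarith)



lemma GS_finite : GS.Finite := by
  unfold GS
  exact (Set.finite_singleton gd).insert gc |>.insert gb |>.insert ga

lemma finite_words (N : ℕ) :
    {l : List Grig | (∀ s ∈ l, s ∈ GS) ∧ l.length ≤ N}.Finite := by
  induction N with
  | zero =>
      apply Set.Finite.subset (Set.finite_singleton ([] : List Grig))
      rintro l ⟨-, hlen⟩
      simp at hlen ⊢
      exact hlen
  | succ N ih =>
      apply Set.Finite.subset (Set.Finite.insert ([] : List Grig)
        (Set.Finite.image2 List.cons GS_finite ih))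
      rintro l ⟨hmem, hlen⟩
      rcases l with _ | ⟨s, l⟩
      · exact Set.mem_insert _ _
      · refine Set.mem_insert_of_mem _ (Set.mem_image2_of_mem (hmem s (by simp)) ?_)
        refine ⟨fun t ht => hmem t (by simp [ht]), ?_⟩
        simpa using Nat.succ_le_succ_iff.mp hlen

include hω in
lemma word_length_le {l : List Grig} (hl : ∀ s ∈ l, s ∈ GS) {m : ℝ}
    (hm : 0 < m) (hms : ∀ s ∈ GS, m ≤ ω s) :
    (l.length : ℝ) * m ≤ (l.map ω).sum := by
  induction l with
  | nil => simp
  | cons s l ih =>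
      have h1 : m ≤ ω s := hms s (hl s (by simp))
      have h2 := ih (fun t ht => hl t (by simp [ht]))
      simp only [List.map_cons, List.sum_cons, List.length_cons]
      push_cast
      linarith

include hω in
lemma ball_finite (x : ℝ) : {g : Grig | wordWeight GS ω g ≤ x}.Finite := by
  set m : ℝ := min (min (ω ga) (ω gb)) (min (ω gc) (ω gd)) with hm_def
  have hm : 0 < m := by
    unfold GS at hω
    simp only [lt_min_iff, hm_def]
    refine ⟨⟨hω ga (by simp), hω gb (by simp)⟩, hω gc (by simp), hω gd (by simp)⟩
  have hms : ∀ s ∈ GS, m ≤ ω s := by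
    rintro s hs
    rcases hs with rfl | rfl | rfl | rfl
    · exact ((min_le_left _ _).trans (min_le_left _ _))
    · exact ((min_le_left _ _).trans (min_le_right _ _))
    · exact ((min_le_right _ _).trans (min_le_left _ _))
    · exact ((min_le_right _ _).trans (min_le_right _ _))
  set N : ℕ := ⌈(x + m) / m⌉₊ with hN
  apply Set.Finite.subset (Set.Finite.image List.prod (finite_words N))
  intro g hg
  obtain ⟨l, hl, hp, hsum⟩ := exists_word_le ω hω hm hg
  refine ⟨l, ⟨hl, ?_⟩, hp⟩
  have h1 : (l.length : ℝ) * m ≤ (l.map ω).sum := word_length_le ω hω hl hm hms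
  have h2 : (l.length : ℝ) ≤ (x + m) / m := by
    rw [le_div_iff₀ hm]
    linarith
  have : (l.length : ℝ) ≤ (N : ℝ) := h2.trans (Nat.le_ceil _)
  exact_mod_cast this

include hω in
lemma growth_mono {x y : ℝ} (hxy : x ≤ y) : growth GS ω x ≤ growth GS ω y := by
  apply Nat.card_mono (ball_finite ω hω y)
  intro g hg
  exact le_trans hg hxy

include hω in
lemma card_le_growth {F : Finset Grig} {x : ℝ} (hF : ∀ g ∈ F, wordWeight GS ω g ≤ x) :
    F.card ≤ growth GS ω x := by
  rw [growth, Nat.card_coe_set_eq]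
  calc F.card = (F : Set Grig).ncard := by rw [Set.ncard_coe_finset]
    _ ≤ _ := Set.ncard_le_ncard (fun g hg => hF g (by simpa using hg)) (ball_finite ω hω x)

end WW

-- ===== the element t = abab and its normal closure =====

/-- the element `abab` -/
def gt : Grig := ga * gb * ga * gb

/-- the normal closure of `abab` -/
def Knc : Subgroup Grig := Subgroup.normalClosure {gt}

lemma gt_mem_Knc : gt ∈ Knc := Subgroup.subset_normalClosure rfl

lemma gt_ne_one : gt ≠ 1 := by
  intro h
  have h2 : ((gt : Grig) : Equiv.Perm (List Bool)) [false, false] = [false, true] := rfl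
  rw [h] at h2
  simp at h2

lemma ga_inv : ga⁻¹ = ga := inv_eq_of_mul_eq_one_right ga_sq
lemma gc_inv : gc⁻¹ = gc := inv_eq_of_mul_eq_one_right gc_sq

section Core

variable (H : Subgroup Grig)
  (hH : ∀ g : Grig, g ∈ H ↔ FixesFirst (g : Equiv.Perm (List Bool)))
  (ψ : H →* Grig × Grig) (hψ : PsiProp H ψ)

include hH hψ in
lemma grig_core :
    Function.Injective ψ ∧
    ∀ g₀ g₁ : Grig, g₀ ∈ Knc → g₁ ∈ Knc →
      ∃ z : H, (z : Grig) ∈ Knc ∧ ψ z = (g₀, g₁) := by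
  classical
  have memH : ∀ g : Grig, FixesFirst (g : Equiv.Perm (List Bool)) → g ∈ H :=
    fun g h => (hH g).2 h
  set h_b : H := ⟨gb, memH gb (by rintro (_|_) σ; exacts [⟨grigA σ, rfl⟩, ⟨grigC σ, rfl⟩])⟩ with h_b_def
  set h_c : H := ⟨gc, memH gc (by rintro (_|_) σ; exacts [⟨grigA σ, rfl⟩, ⟨grigD σ, rfl⟩])⟩ with h_c_def
  set h_d : H := ⟨gd, memH gd (by rintro (_|_) σ; exacts [⟨σ, rfl⟩, ⟨grigB σ, rfl⟩])⟩ with h_d_def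
  set h_aba : H := ⟨ga * gb * ga,
    memH _ (by rintro (_|_) σ; exacts [⟨grigC σ, rfl⟩, ⟨grigA σ, rfl⟩])⟩ with h_aba_def
  set h_aca : H := ⟨ga * gc * ga,
    memH _ (by rintro (_|_) σ; exacts [⟨grigD σ, rfl⟩, ⟨grigA σ, rfl⟩])⟩ with h_aca_def
  set h_ada : H := ⟨ga * gd * ga,
    memH _ (by rintro (_|_) σ; exacts [⟨grigB σ, rfl⟩, ⟨σ, rfl⟩])⟩ with h_ada_def
  -- extracting values of ψ
  have extract : ∀ (z : H) (p q : Grig),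
      (∀ σ, ((z : Grig) : Equiv.Perm (List Bool)) (false :: σ)
          = false :: (p : Equiv.Perm (List Bool)) σ) →
      (∀ σ, ((z : Grig) : Equiv.Perm (List Bool)) (true :: σ)
          = true :: (q : Equiv.Perm (List Bool)) σ) →
      ψ z = (p, q) := by
    intro z p q h0 h1
    have e1 : (ψ z).1 = p := by
      apply Subtype.ext; apply Equiv.ext; intro σ
      have := (hψ z σ).1
      rw [h0 σ] at this
      exact (List.cons_injective this).symm
    have e2 : (ψ z).2 = q := by
      apply Subtype.ext; apply Equiv.ext; intro σ
      have := (hψ z σ).2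
      rw [h1 σ] at this
      exact (List.cons_injective this).symm
    rw [Prod.ext_iff]; exact ⟨e1, e2⟩
  have ψ_b : ψ h_b = (ga, gc) := extract _ _ _ (fun σ => rfl) (fun σ => rfl)
  have ψ_c : ψ h_c = (ga, gd) := extract _ _ _ (fun σ => rfl) (fun σ => rfl)
  have ψ_d : ψ h_d = (1, gb) := extract _ _ _ (fun σ => rfl) (fun σ => rfl)
  have ψ_aba : ψ h_aba = (gc, ga) := extract _ _ _ (fun σ => rfl) (fun σ => rfl)
  have ψ_aca : ψ h_aca = (gd, ga) := extract _ _ _ (fun σ => rfl) (fun σ => rfl)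
  have ψ_ada : ψ h_ada = (gb, 1) := extract _ _ _ (fun σ => rfl) (fun σ => rfl)
  -- injectivity of ψ
  have ψ_ker : ∀ z : H, ψ z = 1 → z = 1 := by
    intro z hz
    have hz1 : (ψ z).1 = 1 := by rw [hz]; rfl
    have hz2 : (ψ z).2 = 1 := by rw [hz]; rfl
    apply Subtype.ext; apply Subtype.ext; apply Equiv.ext
    intro l
    rcases l with _ | ⟨x, σ⟩
    · exact grig_fix_nil _
    · rcases x with _ | _
      · have := (hψ z σ).1
        rw [hz1] at this
        simpa using this
      · have := (hψ z σ).2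
        rw [hz2] at this
        simpa using this
  have ψ_inj : Function.Injective ψ := by
    intro z w h
    have : ψ (z * w⁻¹) = 1 := by rw [map_mul, map_inv, h, mul_inv_cancel]
    have := ψ_ker _ this
    rwa [mul_inv_eq_one] at this
  refine ⟨ψ_inj, ?_⟩
  -- the elements u and v
  set u_H : H := h_aba * h_d * h_aba * h_d with u_H_def
  set v_H : H := h_b * h_ada * h_b * h_ada with v_H_def
  have ψ_u : ψ u_H = (1, gt) := by
    rw [u_H_def, map_mul, map_mul, map_mul, ψ_aba, ψ_d, Prod.mk_mul_mk, Prod.mk_mul_mk,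
      Prod.mk_mul_mk]
    rw [Prod.ext_iff]
    constructor
    · show gc * 1 * gc * 1 = 1
      rw [mul_one, mul_one, gc_sq]
    · show ga * gb * ga * gb = gt
      rfl
  have ψ_v : ψ v_H = (gt, 1) := by
    rw [v_H_def, map_mul, map_mul, map_mul, ψ_b, ψ_ada, Prod.mk_mul_mk, Prod.mk_mul_mk,
      Prod.mk_mul_mk]
    rw [Prod.ext_iff]
    constructor
    · show ga * gb * ga * gb = gt
      rfl
    · show gc * 1 * gc * 1 = 1
      rw [mul_one, mul_one, gc_sq]
  have u_val : (u_H : Grig) = (ga * gb * ga) * gd * (ga * gb * ga) * gd := by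
    rw [u_H_def]; rfl
  have v_val : (v_H : Grig) = gb * (ga * gd * ga) * gb * (ga * gd * ga) := by
    rw [v_H_def]; rfl
  have u_mem : (u_H : Grig) ∈ Knc := by
    have : (u_H : Grig) = gt * (gc * gt * gc⁻¹) := by
      rw [u_val, gc_inv, gd_eq]
      show _ = (ga * gb * ga * gb) * (gc * (ga * gb * ga * gb) * gc)
      group
    rw [this]
    exact mul_mem gt_mem_Knc (Subgroup.normalClosure_normal.conj_mem _ gt_mem_Knc gc)
  have v_mem : (v_H : Grig) ∈ Knc := by
    have : (v_H : Grig) = ga * (u_H : Grig) * ga⁻¹ := by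
      rw [v_val, u_val, ga_inv]
      have h1 : ga * ((ga * gb * ga) * gd * (ga * gb * ga) * gd) * ga
          = (ga * ga) * (gb * (ga * gd * ga) * gb * (ga * gd * ga)) := by group
      rw [h1, ga_sq, one_mul]
    rw [this]
    exact Subgroup.normalClosure_normal.conj_mem _ u_mem ga
  -- surjectivity of the two projections
  have proj1 : ∀ g : Grig, ∃ z : H, (ψ z).1 = g := by
    intro g
    refine Subgroup.closure_induction ?_ ?_ ?_ ?_ (grig_mem_closure g)
    · rintro x (rfl | rfl | rfl | rfl)
      exacts [⟨h_b, by rw [ψ_b]⟩, ⟨h_ada, by rw [ψ_ada]⟩, ⟨h_aba, by rw [ψ_aba]⟩,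
        ⟨h_aca, by rw [ψ_aca]⟩]
    · exact ⟨1, by simp⟩
    · rintro x y _ _ ⟨z, hz⟩ ⟨w, hw⟩
      exact ⟨z * w, by rw [map_mul, Prod.fst_mul, hz, hw]⟩
    · rintro x _ ⟨z, hz⟩
      exact ⟨z⁻¹, by rw [map_inv, Prod.fst_inv, hz]⟩
  have proj2 : ∀ g : Grig, ∃ z : H, (ψ z).2 = g := by
    intro g
    refine Subgroup.closure_induction ?_ ?_ ?_ ?_ (grig_mem_closure g)
    · rintro x (rfl | rfl | rfl | rfl)
      exacts [⟨h_aba, by rw [ψ_aba]⟩, ⟨h_d, by rw [ψ_d]⟩, ⟨h_b, by rw [ψ_b]⟩,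
        ⟨h_c, by rw [ψ_c]⟩]
    · exact ⟨1, by simp⟩
    · rintro x y _ _ ⟨z, hz⟩ ⟨w, hw⟩
      exact ⟨z * w, by rw [map_mul, Prod.snd_mul, hz, hw]⟩
    · rintro x _ ⟨z, hz⟩
      exact ⟨z⁻¹, by rw [map_inv, Prod.snd_inv, hz]⟩
  -- the image subgroup
  set P : Subgroup (Grig × Grig) := Subgroup.map ψ (Knc.comap H.subtype) with P_def
  have memP : ∀ p : Grig × Grig, p ∈ P ↔ ∃ z : H, (z : Grig) ∈ Knc ∧ ψ z = p := by
    intro p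
    rw [P_def, Subgroup.mem_map]
    constructor
    · rintro ⟨z, hz, rfl⟩; exact ⟨z, hz, rfl⟩
    · rintro ⟨z, hz, rfl⟩; exact ⟨z, hz, rfl⟩
  have stepB : ∀ g : Grig, g ∈ Knc → ((1 : Grig), g) ∈ P := by
    have hle : Knc ≤ P.comap ((1 : Grig →* Grig).prod (MonoidHom.id Grig)) := by
      apply (Subgroup.closure_le _).2
      intro x hx
      rw [Group.mem_conjugatesOfSet_iff] at hx
      obtain ⟨a, ha, hconj⟩ := hx
      rw [Set.mem_singleton_iff] at ha
      subst ha
      obtain ⟨cc, hcc⟩ := isConj_iff.1 hconj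
      obtain ⟨z, hz⟩ := proj2 cc
      rw [SetLike.mem_coe, Subgroup.mem_comap]
      show ((1 : Grig), x) ∈ P
      rw [memP]
      refine ⟨z * u_H * z⁻¹, ?_, ?_⟩
      · have : ((z * u_H * z⁻¹ : H) : Grig) = (z : Grig) * (u_H : Grig) * (z : Grig)⁻¹ := rfl
        rw [this]
        exact Subgroup.normalClosure_normal.conj_mem _ u_mem _
      · rw [map_mul, map_mul, map_inv, ψ_u]
        rw [Prod.ext_iff]
        constructor
        · show (ψ z).1 * 1 * ((ψ z)⁻¹).1 = 1
          rw [mul_one, Prod.fst_inv, mul_inv_cancel]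
        · show (ψ z).2 * gt * ((ψ z)⁻¹).2 = x
          rw [Prod.snd_inv, hz, hcc]
    intro g hg
    exact hle hg
  have stepA : ∀ g : Grig, g ∈ Knc → ((g, (1 : Grig)) : Grig × Grig) ∈ P := by
    have hle : Knc ≤ P.comap ((MonoidHom.id Grig).prod (1 : Grig →* Grig)) := by
      apply (Subgroup.closure_le _).2
      intro x hx
      rw [Group.mem_conjugatesOfSet_iff] at hx
      obtain ⟨a, ha, hconj⟩ := hx
      rw [Set.mem_singleton_iff] at ha
      subst ha
      obtain ⟨cc, hcc⟩ := isConj_iff.1 hconj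
      obtain ⟨z, hz⟩ := proj1 cc
      rw [SetLike.mem_coe, Subgroup.mem_comap]
      show ((x, (1 : Grig)) : Grig × Grig) ∈ P
      rw [memP]
      refine ⟨z * v_H * z⁻¹, ?_, ?_⟩
      · have : ((z * v_H * z⁻¹ : H) : Grig) = (z : Grig) * (v_H : Grig) * (z : Grig)⁻¹ := rfl
        rw [this]
        exact Subgroup.normalClosure_normal.conj_mem _ v_mem _
      · rw [map_mul, map_mul, map_inv, ψ_v]
        rw [Prod.ext_iff]
        constructor
        · show (ψ z).1 * gt * ((ψ z)⁻¹).1 = x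
          rw [Prod.fst_inv, hz, hcc]
        · show (ψ z).2 * 1 * ((ψ z)⁻¹).2 = 1
          rw [mul_one, Prod.snd_inv, mul_inv_cancel]
    intro g hg
    exact hle hg
  intro g₀ g₁ h₀ h₁
  have : ((g₀, g₁) : Grig × Grig) ∈ P := by
    have := mul_mem (stepA g₀ h₀) (stepB g₁ h₁)
    simpa using this
  rw [memP] at this
  exact this

end Core

/-- If a positive weight `ω` on the generators of the Grigorchuk group satisfies the
contraction `∂_ω(h) ≤ η·max{∂_ω(h₀), ∂_ω(h₁)} + K` on the first-level stabilizer for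
some `K ≥ 0` and `1 < η < 4`, then the growth of `G` satisfies `γ(n) ≿ e^{n^α}` with
`α = log 2 / log η > 1/2`. -/
theorem grigorchuk_growth_lower_bound_of_contraction
    (ω : Grig → ℝ) (hω : ∀ s ∈ ({ga, gb, gc, gd} : Set Grig), 0 < ω s)
    (η K : ℝ) (hη : 1 < η) (hη4 : η < 4) (hK : 0 ≤ K)
    (H : Subgroup Grig)
    (hH : ∀ g : Grig, g ∈ H ↔ FixesFirst (g : Equiv.Perm (List Bool)))
    (ψ : H →* Grig × Grig) (hψ : PsiProp H ψ)
    (hcontr : ∀ h : H,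
      wordWeight ({ga, gb, gc, gd} : Set Grig) ω (h : Grig) ≤
        η * max (wordWeight ({ga, gb, gc, gd} : Set Grig) ω (ψ h).1)
                (wordWeight ({ga, gb, gc, gd} : Set Grig) ω (ψ h).2) + K) :
    1 / 2 < Real.log 2 / Real.log η ∧
    ∃ C : ℝ, 0 < C ∧ ∃ c : ℝ, 0 < c ∧ ∃ n₀ : ℝ, ∀ n : ℝ, n₀ ≤ n →
      Real.exp (c * n ^ (Real.log 2 / Real.log η)) ≤
        growth ({ga, gb, gc, gd} : Set Grig) ω (C * n) := by
  classical
  have hη0 : (0 : ℝ) < η := lt_trans one_pos hη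
  have hlogη : 0 < Real.log η := Real.log_pos hη
  have hlog2 : 0 < Real.log 2 := Real.log_pos one_lt_two
  set α : ℝ := Real.log 2 / Real.log η with α_def
  have hα : 1 / 2 < α := by
    rw [α_def, lt_div_iff₀ hlogη]
    have h4 : Real.log 4 = 2 * Real.log 2 := by
      rw [show (4 : ℝ) = 2 ^ 2 by norm_num, Real.log_pow]
      push_cast; ring
    have := Real.log_lt_log hη0 hη4
    linarith
  have hα0 : 0 < α := lt_trans (by norm_num) hα
  refine ⟨hα, ?_⟩
  have hω' : ∀ s ∈ GS, 0 < ω s := hω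
  obtain ⟨ψ_inj, key⟩ := grig_core H hH ψ hψ
  -- the choice function
  set f : Grig × Grig → Grig := fun p =>
    if h : ∃ z : H, (z : Grig) ∈ Knc ∧ ψ z = p then ((h.choose : H) : Grig) else 1 with f_def
  have f_spec : ∀ p : Grig × Grig, p.1 ∈ Knc → p.2 ∈ Knc →
      ∃ z : H, (z : Grig) ∈ Knc ∧ ψ z = p ∧ f p = (z : Grig) := by
    intro p h1 h2
    have hex : ∃ z : H, (z : Grig) ∈ Knc ∧ ψ z = p := by
      obtain ⟨z, hz, hzp⟩ := key p.1 p.2 h1 h2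
      exact ⟨z, hz, by rw [hzp]⟩
    refine ⟨hex.choose, hex.choose_spec.1, hex.choose_spec.2, ?_⟩
    rw [f_def]; simp only [dif_pos hex]
  -- weights
  set W : Grig → ℝ := wordWeight GS ω with W_def
  have hcontr' : ∀ h : H, W (h : Grig) ≤ η * max (W (ψ h).1) (W (ψ h).2) + K := hcontr
  set w1 : ℝ := ω ga + ω gb + ω ga + ω gb with w1_def
  have hga : (0:ℝ) < ω ga := hω ga (by left; rfl)
  have hgb : (0:ℝ) < ω gb := hω gb (by right; left; rfl)
  have hw1 : 0 < w1 := by rw [w1_def]; linarith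
  set B : ℝ := K / (η - 1) with B_def
  have hB0 : 0 ≤ B := div_nonneg hK (by linarith)
  have hB : (η - 1) * B = K := by
    rw [B_def, mul_comm, div_mul_cancel₀ _ (sub_ne_zero.2 (ne_of_gt hη))]
  have hWt : W gt ≤ w1 := by
    have := wordWeight_le ω hω' (g := gt) (l := [ga, gb, ga, gb])
      (by intro s hs; simp only [List.mem_cons, List.not_mem_nil, or_false] at hs
          rcases hs with rfl | rfl | rfl | rfl
          · left; rfl
          · right; left; rfl
          · left; rfl
          · right; left; rfl)
      (by simp [gt]; group)
    simpa [w1_def] using this.trans (le_of_eq (by simp; ring))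
  have hW1 : W 1 ≤ 0 := wordWeight_one ω hω'
  -- the recursively defined weight bound
  set x : ℕ → ℝ := fun k => Nat.rec w1 (fun _ r => η * r + K) k with x_def
  have x_zero : x 0 = w1 := rfl
  have x_succ : ∀ k, x (k + 1) = η * x k + K := fun k => rfl
  have x_bound : ∀ k, x k + B ≤ (w1 + B) * η ^ k := by
    intro k
    induction k with
    | zero => simp [x_zero]
    | succ k ih =>
        have h1 : x (k + 1) + B = η * (x k + B) := by
          rw [x_succ]; nlinarith [hB]
        rw [h1, pow_succ]
        calc η * (x k + B) ≤ η * ((w1 + B) * η ^ k) := by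
              exact mul_le_mul_of_nonneg_left ih (le_of_lt hη0)
          _ = (w1 + B) * (η ^ k * η) := by ring
  -- the main counting induction
  have main : ∀ k : ℕ, ∃ F : Finset Grig, F.card = 2 ^ 2 ^ k ∧
      ∀ g ∈ F, g ∈ Knc ∧ W g ≤ x k := by
    intro k
    induction k with
    | zero =>
        refine ⟨{1, gt}, ?_, ?_⟩
        · rw [Finset.card_insert_of_notMem (by simp [Ne.symm gt_ne_one]), Finset.card_singleton]
          norm_num
        · intro g hg
          rcases Finset.mem_insert.1 hg with rfl | hg
          · exact ⟨Subgroup.one_mem _, by rw [x_zero]; linarith⟩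
          · rw [Finset.mem_singleton] at hg; subst hg
            exact ⟨gt_mem_Knc, by rw [x_zero]; exact hWt⟩
    | succ k ih =>
        obtain ⟨F, hcard, hF⟩ := ih
        refine ⟨(F ×ˢ F).image f, ?_, ?_⟩
        · rw [Finset.card_image_of_injOn, Finset.card_product, hcard, ← pow_add]
          · congr 1
            omega
          · intro p hp q hq hpq
            simp only [Finset.coe_product, Set.mem_prod, Finset.mem_coe] at hp hq
            obtain ⟨zp, _, hzp, hfp⟩ := f_spec p (hF _ hp.1).1 (hF _ hp.2).1
            obtain ⟨zq, _, hzq, hfq⟩ := f_spec q (hF _ hq.1).1 (hF _ hq.2).1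
            rw [hfp, hfq] at hpq
            have : zp = zq := Subtype.ext hpq
            rw [← hzp, ← hzq, this]
        · intro g hg
          rw [Finset.mem_image] at hg
          obtain ⟨p, hp, rfl⟩ := hg
          rw [Finset.mem_product] at hp
          obtain ⟨z, hzK, hzp, hfp⟩ := f_spec p (hF _ hp.1).1 (hF _ hp.2).1
          rw [hfp]
          refine ⟨hzK, ?_⟩
          have h1 := hcontr' z
          have h2 : max (W (ψ z).1) (W (ψ z).2) ≤ x k := by
            rw [hzp]
            exact max_le (hF _ hp.1).2 (hF _ hp.2).2
          have h3 : η * max (W (ψ z).1) (W (ψ z).2) ≤ η * x k :=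
            mul_le_mul_of_nonneg_left h2 (le_of_lt hη0)
          rw [x_succ]
          linarith
  -- conclusion
  refine ⟨w1 + B, by linarith, Real.log 2 / 2, by positivity, 1, ?_⟩
  intro n hn
  have hn0 : (0 : ℝ) < n := by linarith
  set k : ℕ := ⌊Real.logb η n⌋₊ with k_def
  have hlogb0 : 0 ≤ Real.logb η n := Real.logb_nonneg hη hn
  have hk1 : (η : ℝ) ^ k ≤ n := by
    have h1 : (k : ℝ) ≤ Real.logb η n := Nat.floor_le hlogb0
    have h2 : η ^ (k : ℝ) ≤ η ^ Real.logb η n :=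
      Real.rpow_le_rpow_of_exponent_le (le_of_lt hη) h1
    rwa [Real.rpow_natCast, Real.rpow_logb hη0 (ne_of_gt hη) hn0] at h2
  have hk2 : n ≤ η ^ (k + 1) := by
    have h1 : Real.logb η n < (k : ℝ) + 1 := Nat.lt_floor_add_one _
    have h2 : η ^ Real.logb η n ≤ η ^ ((k : ℝ) + 1) :=
      Real.rpow_le_rpow_of_exponent_le (le_of_lt hη) (le_of_lt h1)
    rw [Real.rpow_logb hη0 (ne_of_gt hη) hn0] at h2
    calc n ≤ η ^ ((k : ℝ) + 1) := h2
      _ = η ^ (k + 1 : ℕ) := by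
          rw [← Real.rpow_natCast η (k + 1)]
          push_cast
          ring_nf
  -- growth lower bound
  obtain ⟨F, hcard, hF⟩ := main k
  have hgrowth1 : 2 ^ 2 ^ k ≤ growth GS ω (x k) := by
    rw [← hcard]
    exact card_le_growth ω hω' (fun g hg => (hF g hg).2)
  have hxk : x k ≤ (w1 + B) * n := by
    have h1 : (w1 + B) * η ^ k ≤ (w1 + B) * n :=
      mul_le_mul_of_nonneg_left hk1 (by linarith)
    linarith [x_bound k]
  have hgrowth2 : 2 ^ 2 ^ k ≤ growth GS ω ((w1 + B) * n) :=
    le_trans hgrowth1 (growth_mono ω hω' hxk)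
  -- the exponential bound
  have hηα : η ^ α = (2 : ℝ) := by
    rw [Real.rpow_def_of_pos hη0, α_def, mul_div_cancel₀ _ (ne_of_gt hlogη)]
    exact Real.exp_log (by norm_num)
  have hnα : n ^ α ≤ (2 : ℝ) ^ (k + 1 : ℕ) := by
    have h1 : n ^ α ≤ (η ^ (k + 1 : ℕ)) ^ α :=
      Real.rpow_le_rpow (le_of_lt hn0) hk2 (le_of_lt hα0)
    have h2 : (η ^ (k + 1 : ℕ)) ^ α = (2 : ℝ) ^ (k + 1 : ℕ) := by
      rw [← Real.rpow_natCast η (k + 1), ← Real.rpow_mul (le_of_lt hη0), mul_comm,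
        Real.rpow_mul (le_of_lt hη0), hηα, Real.rpow_natCast]
    rw [← h2]; exact h1
  have hexp : Real.exp (Real.log 2 / 2 * n ^ α) ≤ ((2 : ℝ) ^ (2 ^ k : ℕ)) := by
    have h1 : Real.log 2 / 2 * n ^ α ≤ Real.log 2 / 2 * 2 ^ (k + 1 : ℕ) :=
      mul_le_mul_of_nonneg_left hnα (by positivity)
    have h2 : Real.log 2 / 2 * (2 : ℝ) ^ (k + 1 : ℕ) = Real.log 2 * (2 : ℝ) ^ (k : ℕ) := by
      rw [pow_succ]; ring
    have h3 : Real.exp (Real.log 2 * (2 : ℝ) ^ (k : ℕ)) = (2 : ℝ) ^ ((2 : ℝ) ^ (k : ℕ)) := by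
      rw [Real.rpow_def_of_pos (by norm_num : (0:ℝ) < 2)]
    have h4 : ((2 : ℝ) ^ ((2 : ℝ) ^ (k : ℕ)) : ℝ) = (2 : ℝ) ^ ((2 ^ k : ℕ) : ℝ) := by
      norm_cast
    calc Real.exp (Real.log 2 / 2 * n ^ α) ≤ Real.exp (Real.log 2 * (2 : ℝ) ^ (k : ℕ)) := by
          rw [← h2]; exact Real.exp_le_exp.2 h1
      _ = (2 : ℝ) ^ ((2 : ℝ) ^ (k : ℕ)) := h3
      _ = (2 : ℝ) ^ ((2 ^ k : ℕ) : ℝ) := h4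
      _ = (2 : ℝ) ^ (2 ^ k : ℕ) := Real.rpow_natCast 2 (2 ^ k)
  have hfinal : ((2 : ℝ) ^ (2 ^ k : ℕ)) ≤ (growth GS ω ((w1 + B) * n) : ℝ) := by
    calc ((2 : ℝ) ^ (2 ^ k : ℕ)) = ((2 ^ 2 ^ k : ℕ) : ℝ) := by push_cast; ring
      _ ≤ _ := Nat.cast_le.2 hgrowth2
  exact le_trans hexp hfinal
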